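/- Let P : [0, l] → ℝ be convex and differentiable and suppose c ≤ c'. If Δr ↦ P(Δr₃ − Δr) + c·Δr is increasing on [0, ε] for some ε > 0, then Δr ↦ P(Δr₃ − Δr) + c'·Δr is increasing for all Δr ∈ [0, Δr₃]. -/
import Mathlib

open Set

/-- If moving load back was unprofitable for penalty `c` (the function
`Δr ↦ P(Δr₃ − Δr) + c·Δr` increases on `[0, ε]`), then for any larger penalty
`c' ≥ c` the function `Δr ↦ P(Δr₃ − Δr) + c'·Δr` increases on all of `[0, Δr₃]`. -/
theorem stmt_15 (P : ℝ → ℝ) (l c c' Δr₃ ε : ℝ)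
    (hdiff : Differentiable ℝ P)
    (hconv : ConvexOn ℝ (Icc 0 l) P)
    (hcc' : c ≤ c')
    (h3 : Δr₃ ∈ Icc 0 l)
    (hε : 0 < ε) (hεΔ : ε ≤ Δr₃)
    (hinc : StrictMonoOn (fun Δr => P (Δr₃ - Δr) + c * Δr) (Icc 0 ε)) :
    StrictMonoOn (fun Δr => P (Δr₃ - Δr) + c' * Δr) (Icc 0 Δr₃) := by
  obtain ⟨h30, h3l⟩ := h3
  intro x hx y hy hxy
  obtain ⟨hx0, hxΔ⟩ := hx
  obtain ⟨hy0, hyΔ⟩ := hy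
  set v := min ε y with hv
  have hv0 : 0 < v := lt_min hε (lt_of_le_of_lt hx0 hxy)
  have hvε : v ≤ ε := min_le_left _ _
  have hvy : v ≤ y := min_le_right _ _
  -- slope near right endpoint is < c
  have hslope1 : (P Δr₃ - P (Δr₃ - v)) / v < c := by
    have := hinc (Set.mem_Icc.mpr ⟨le_refl 0, le_of_lt hε⟩)
      (Set.mem_Icc.mpr ⟨le_of_lt hv0, hvε⟩) hv0
    simp only [mul_zero, add_zero, sub_zero] at this
    rw [div_lt_iff₀ hv0]
    linarith
  set a := Δr₃ - y with ha
  set b := Δr₃ - x with hb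
  have haS : a ∈ Icc 0 l := ⟨by simp [ha]; linarith, by simp [ha]; linarith⟩
  have hbS : b ∈ Icc 0 l := ⟨by simp [hb]; linarith, by simp [hb]; linarith⟩
  have hΔS : Δr₃ ∈ Icc 0 l := ⟨h30, h3l⟩
  have hvS : Δr₃ - v ∈ Icc 0 l := ⟨by linarith, by linarith⟩
  have hab : a < b := by simp [ha, hb]; linarith
  have haΔ : a < Δr₃ := by simp [ha]; linarith [lt_of_le_of_lt hx0 hxy]
  -- slope(a,b) ≤ slope(a,Δr₃)
  have hs2 : (P b - P a) / (b - a) ≤ (P Δr₃ - P a) / (Δr₃ - a) :=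
    hconv.secant_mono haS hbS hΔS (ne_of_gt hab) (ne_of_gt haΔ) (by simp [hb]; linarith)
  -- slope(a,Δr₃) ≤ slope(Δr₃-v,Δr₃)
  have hs3 : (P Δr₃ - P a) / (Δr₃ - a) ≤ (P Δr₃ - P (Δr₃ - v)) / v := by
    have := hconv.secant_mono hΔS haS hvS (ne_of_lt haΔ)
      (ne_of_lt (by linarith : Δr₃ - v < Δr₃)) (by linarith)
    have e1 : (P a - P Δr₃) / (a - Δr₃) = (P Δr₃ - P a) / (Δr₃ - a) := by
      rw [← neg_div_neg_eq]; ring_nf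
    have e2 : (P (Δr₃ - v) - P Δr₃) / (Δr₃ - v - Δr₃) = (P Δr₃ - P (Δr₃ - v)) / v := by
      rw [← neg_div_neg_eq]; ring_nf
    rw [e1, e2] at this; exact this
  have hba : 0 < b - a := by linarith
  have key : (P b - P a) / (b - a) < c' := lt_of_le_of_lt (hs2.trans hs3) (lt_of_lt_of_le hslope1 hcc')
  rw [div_lt_iff₀ hba] at key
  have hbaxy : b - a = y - x := by simp [ha, hb]
  simp only []
  have : P b - P a < c' * (y - x) := by rw [← hbaxy]; exact key
  show P (Δr₃ - x) + c' * x < P (Δr₃ - y) + c' * y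
  rw [← hb, ← ha]
  nlinarith [this]
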